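/- For any policy π in a finite episodic MDP, the trajectory entropy and visitation entropy satisfy TE(qᵖ) ≤ VE(dᵖ) ≤ H · TE(qᵖ). Moreover VE(dᵖ) − TE(qᵖ) = KL(qᵖ, ⊗_{h=1}^H dᵖ_h), the KL divergence between the trajectory distribution and the product of its step-marginals. -/

import Mathlib

open Real Finset

/-- Shannon entropy of a finite distribution. -/
noncomputable def entropy {X : Type*} [Fintype X] (d : X → ℝ) : ℝ :=
  -∑ x, d x * Real.log (d x)

/-- Kullback–Leibler divergence between finite distributions. -/
noncomputable def klDiv {X : Type*} [Fintype X] (p q : X → ℝ) : ℝ :=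
  ∑ x, p x * Real.log (p x / q x)

/-- Trajectory distribution of a Markovian policy `pol` in an episodic MDP with horizon `H`,
transitions `p` and initial state `s1` (steps indexed `0, …, H-1`):
`qᵖ(m) = 1{s₀ = s₁} ∏_h π_h(a_h|s_h) ∏_{h+1<H} p_h(s_{h+1}|s_h,a_h)`. -/
noncomputable def trajDist {S A : Type*} [Fintype S] [Fintype A] [DecidableEq S]
    (H : ℕ) [NeZero H] (p : ℕ → S → A → S → ℝ) (pol : ℕ → S → A → ℝ) (s1 : S)
    (m : Fin H → S × A) : ℝ :=
  (if (m 0).1 = s1 then (1 : ℝ) else 0)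
    * (∏ h : Fin H, pol h (m h).1 (m h).2)
    * ∏ h : Fin H, (if hlt : (h : ℕ) + 1 < H then p h (m h).1 (m h).2 (m ⟨h + 1, hlt⟩).1 else 1)

/-- Visitation distribution at step `h`: the marginal of the trajectory distribution. -/
noncomputable def visitDist {S A : Type*} [Fintype S] [Fintype A] [DecidableEq S] [DecidableEq A]
    (H : ℕ) [NeZero H] (p : ℕ → S → A → S → ℝ) (pol : ℕ → S → A → ℝ) (s1 : S)
    (h : Fin H) (sa : S × A) : ℝ :=
  ∑ m : Fin H → S × A, if m h = sa then trajDist H p pol s1 m else 0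

private lemma trans_prod_cons {S A : Type*} [Fintype S] [Fintype A] (n : ℕ)
    (p : ℕ → S → A → S → ℝ) (sa : S × A) (m' : Fin (n+1) → S × A) :
    (∏ h : Fin (n+2), (if hlt : (h : ℕ) + 1 < n+2 then
        p h ((Fin.cons sa m' : Fin (n+2) → S × A) h).1 ((Fin.cons sa m' : Fin (n+2) → S × A) h).2
          ((Fin.cons sa m' : Fin (n+2) → S × A) ⟨(h : ℕ) + 1, hlt⟩).1 else 1))
    = p 0 sa.1 sa.2 (m' 0).1 *
      ∏ h : Fin (n+1), (if hlt : (h : ℕ) + 1 < n+1 then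
        p ((h:ℕ)+1) (m' h).1 (m' h).2 (m' ⟨(h : ℕ) + 1, hlt⟩).1 else 1) := by
  have hcons : ∀ (k : ℕ) (hk : k + 1 < n + 2),
      (Fin.cons sa m' : Fin (n+2) → S × A) ⟨k+1, hk⟩ = m' ⟨k, Nat.lt_of_succ_lt_succ hk⟩ :=
    fun k hk => by
      exact Fin.cons_succ (α := fun _ : Fin (n+2) => S × A) sa m' ⟨k, Nat.lt_of_succ_lt_succ hk⟩
  rw [Fin.prod_univ_succ]
  congr 1
  · refine Finset.prod_congr rfl fun h _ => ?_
    by_cases hlt : (h:ℕ) + 1 < n + 1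
    · rw [dif_pos (show ((Fin.succ h : Fin (n+2)) : ℕ) + 1 < n+2 by simp [Fin.val_succ]; omega),
        dif_pos hlt]
      simp only [Fin.val_succ]
      rw [hcons ((h:ℕ)+1)]
      simp
    · rw [dif_neg (by simp [Fin.val_succ]; omega), dif_neg hlt]

private lemma sum_traj_aux {S A : Type*} [Fintype S] [Fintype A] :
    ∀ (n : ℕ) (p : ℕ → S → A → S → ℝ) (pol : ℕ → S → A → ℝ) (w : S → ℝ),
      (∀ h s a, ∑ s', p h s a s' = 1) → (∀ h s, ∑ a, pol h s a = 1) →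
      ∑ m : Fin (n + 1) → S × A,
        (w (m 0).1 * (∏ h : Fin (n+1), pol h (m h).1 (m h).2)
          * ∏ h : Fin (n+1), (if hlt : (h : ℕ) + 1 < n+1 then
              p h (m h).1 (m h).2 (m ⟨(h : ℕ) + 1, hlt⟩).1 else 1))
        = ∑ s, w s := by
  intro n
  induction n with
  | zero =>
    intro p pol w hp1 hpol1
    rw [← (Fin.consEquiv (fun _ : Fin 1 => S × A)).sum_comp, Fintype.sum_prod_type]
    simp [Fin.consEquiv, Fintype.sum_prod_type, ← Finset.mul_sum, hpol1]
  | succ n ih =>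
    intro p pol w hp1 hpol1
    rw [← (Fin.consEquiv (fun _ : Fin (n+2) => S × A)).sum_comp, Fintype.sum_prod_type]
    have key : ∀ (sa : S × A) (m' : Fin (n+1) → S × A),
        (w (((Fin.consEquiv (fun _ : Fin (n+2) => S × A)) (sa, m')) 0).1
          * (∏ h : Fin (n+2), pol h (((Fin.consEquiv (fun _ : Fin (n+2) => S × A)) (sa, m')) h).1
              (((Fin.consEquiv (fun _ : Fin (n+2) => S × A)) (sa, m')) h).2)
          * ∏ h : Fin (n+2), (if hlt : (h : ℕ) + 1 < n+2 then
              p h (((Fin.consEquiv (fun _ : Fin (n+2) => S × A)) (sa, m')) h).1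
                (((Fin.consEquiv (fun _ : Fin (n+2) => S × A)) (sa, m')) h).2
                (((Fin.consEquiv (fun _ : Fin (n+2) => S × A)) (sa, m')) ⟨(h:ℕ)+1, hlt⟩).1 else 1))
        = (w sa.1 * pol 0 sa.1 sa.2) *
          ((fun s => p 0 sa.1 sa.2 s) (m' 0).1
            * (∏ h : Fin (n+1), (fun h => pol (h+1)) (h : ℕ) (m' h).1 (m' h).2)
            * ∏ h : Fin (n+1), (if hlt : (h : ℕ) + 1 < n+1 then
                (fun h => p (h+1)) (h : ℕ) (m' h).1 (m' h).2 (m' ⟨(h:ℕ)+1, hlt⟩).1 else 1)) := by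
      intro sa m'
      have e1 : ((Fin.consEquiv (fun _ : Fin (n+2) => S × A)) (sa, m') : Fin (n+2) → S × A)
          = Fin.cons sa m' := rfl
      rw [e1, trans_prod_cons n p sa m', Fin.prod_univ_succ (fun h : Fin (n+2) =>
        pol h ((Fin.cons sa m' : Fin (n+2) → S × A) h).1 ((Fin.cons sa m' : Fin (n+2) → S × A) h).2)]
      simp only [Fin.cons_zero, Fin.cons_succ, Fin.val_succ, Fin.val_zero]
      ring
    trans (∑ sa : S × A, w sa.1 * pol 0 sa.1 sa.2)
    · refine Finset.sum_congr rfl fun sa _ => ?_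
      rw [Finset.sum_congr rfl (fun m' _ => key sa m'), ← Finset.mul_sum,
        ih (fun h => p (h+1)) (fun h => pol (h+1)) (fun s => p 0 sa.1 sa.2 s)
          (fun h s a => hp1 (h+1) s a) (fun h s => hpol1 (h+1) s), hp1 0 sa.1 sa.2, mul_one]
    · rw [Fintype.sum_prod_type]
      simp [← Finset.mul_sum, hpol1]

private lemma kl_ptw {q r : ℝ} (hq : 0 ≤ q) (hr : 0 ≤ r) (h : 0 < q → 0 < r) :
    q - r ≤ q * Real.log (q / r) := by
  rcases eq_or_lt_of_le hq with hq0 | hq'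
  · simp [← hq0]; linarith
  · have hr' := h hq'
    have hl : Real.log r - Real.log q ≤ r / q - 1 := by
      have := Real.log_le_sub_one_of_pos (div_pos hr' hq')
      rwa [Real.log_div hr'.ne' hq'.ne'] at this
    have h2 : q * (Real.log r - Real.log q) ≤ q * (r / q - 1) :=
      mul_le_mul_of_nonneg_left hl hq
    rw [Real.log_div hq'.ne' hr'.ne']
    have h3 : q * (r / q - 1) = r - q := by field_simp
    nlinarith

/-- For any Markovian policy `π` in a finite episodic MDP, the trajectory entropy `TE(qᵖ)`
and the visitation entropy `VE(dᵖ) = Σ_h H(dᵖ_h)` satisfy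
`TE(qᵖ) ≤ VE(dᵖ) ≤ H · TE(qᵖ)`, and moreover
`VE(dᵖ) − TE(qᵖ) = KL(qᵖ, ⊗_h dᵖ_h)`. -/
theorem trajectoryEntropy_le_visitationEntropy_le {S A : Type*}
    [Fintype S] [Fintype A] [DecidableEq S] [DecidableEq A]
    (H : ℕ) [NeZero H] (p : ℕ → S → A → S → ℝ) (pol : ℕ → S → A → ℝ) (s1 : S)
    (hp0 : ∀ h s a s', 0 ≤ p h s a s') (hp1 : ∀ h s a, ∑ s', p h s a s' = 1)
    (hpol0 : ∀ h s a, 0 ≤ pol h s a) (hpol1 : ∀ h s, ∑ a, pol h s a = 1) :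
    entropy (trajDist H p pol s1) ≤ ∑ h : Fin H, entropy (visitDist H p pol s1 h) ∧
    (∑ h : Fin H, entropy (visitDist H p pol s1 h)) ≤ H * entropy (trajDist H p pol s1) ∧
    (∑ h : Fin H, entropy (visitDist H p pol s1 h)) - entropy (trajDist H p pol s1)
      = klDiv (trajDist H p pol s1) (fun m => ∏ h : Fin H, visitDist H p pol s1 h (m h)) := by
  set q : (Fin H → S × A) → ℝ := trajDist H p pol s1 with hq
  set d : Fin H → S × A → ℝ := visitDist H p pol s1 with hd
  have q0 : ∀ m, 0 ≤ q m := by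
    intro m
    rw [hq]
    unfold trajDist
    refine mul_nonneg (mul_nonneg ?_ ?_) ?_
    · split <;> norm_num
    · exact Finset.prod_nonneg fun h _ => hpol0 _ _ _
    · refine Finset.prod_nonneg fun h _ => ?_
      split
      · exact hp0 _ _ _ _
      · norm_num
  have qsum : ∑ m, q m = 1 := by
    obtain ⟨n, rfl⟩ : ∃ n, H = n + 1 := ⟨H - 1, (Nat.succ_pred_eq_of_pos (NeZero.pos H)).symm⟩
    have h2 : ∑ m : Fin (n+1) → S × A, q m = ∑ s, (if s = s1 then (1:ℝ) else 0) := by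
      rw [hq]
      exact sum_traj_aux n p pol (fun s => if s = s1 then (1:ℝ) else 0) hp1 hpol1
    rw [h2]
    simp
  have dval : ∀ h sa, d h sa = ∑ m, if m h = sa then q m else 0 := fun h sa => rfl
  have d0 : ∀ h sa, 0 ≤ d h sa := by
    intro h sa
    rw [dval]
    refine Finset.sum_nonneg fun m _ => ?_
    split
    · exact q0 m
    · exact le_rfl
  have dsum : ∀ h, ∑ sa, d h sa = 1 := by
    intro h
    simp only [dval]
    rw [Finset.sum_comm]
    simp only [Finset.sum_ite_eq, Finset.mem_univ, if_true]
    exact qsum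
  have dq : ∀ h m, q m ≤ d h (m h) := by
    intro h m
    rw [dval]
    have := Finset.single_le_sum (f := fun m' : Fin H → S × A => if m' h = m h then q m' else 0)
      (fun m' _ => by split; exacts [q0 m', le_rfl]) (Finset.mem_univ m)
    simpa using this
  have marg : ∀ h, ∑ sa, d h sa * Real.log (d h sa) = ∑ m, q m * Real.log (d h (m h)) := by
    intro h
    have e1 : ∀ sa : S × A, d h sa * Real.log (d h sa)
        = ∑ m : Fin H → S × A, (if m h = sa then q m * Real.log (d h sa) else 0) := by
      intro sa
      rw [dval, Finset.sum_mul]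
      exact Finset.sum_congr rfl fun m _ => by split <;> simp
    rw [Finset.sum_congr rfl fun sa _ => e1 sa, Finset.sum_comm]
    refine Finset.sum_congr rfl fun m _ => ?_
    rw [Finset.sum_ite_eq]
    simp
  have rsum : ∑ m : Fin H → S × A, ∏ h, d h (m h) = 1 := by
    rw [← Fintype.prod_sum]
    simp [dsum]
  have rnn : ∀ m : Fin H → S × A, 0 ≤ ∏ h, d h (m h) :=
    fun m => Finset.prod_nonneg fun h _ => d0 h (m h)
  have qpos_imp : ∀ m, 0 < q m → ∀ h, 0 < d h (m h) :=
    fun m hm h => lt_of_lt_of_le hm (dq h m)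
  have klid : klDiv q (fun m => ∏ h, d h (m h)) = (∑ h, entropy (d h)) - entropy q := by
    unfold klDiv entropy
    have term : ∀ m, q m * Real.log (q m / ∏ h, d h (m h))
        = q m * Real.log (q m) - ∑ h, q m * Real.log (d h (m h)) := by
      intro m
      rcases eq_or_lt_of_le (q0 m) with h0 | hpos
      · simp [← h0]
      · have hdm : ∀ h : Fin H, 0 < d h (m h) := qpos_imp m hpos
        have hprod : (0:ℝ) < ∏ h, d h (m h) := Finset.prod_pos fun h _ => hdm h
        rw [Real.log_div hpos.ne' hprod.ne',
          Real.log_prod (fun h _ => (hdm h).ne'), mul_sub, Finset.mul_sum]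
    rw [Finset.sum_congr rfl fun m _ => term m, Finset.sum_sub_distrib, Finset.sum_comm]
    rw [Finset.sum_congr rfl fun h (_ : h ∈ univ) => (marg h).symm]
    rw [Finset.sum_neg_distrib]
    ring
  have klnn : 0 ≤ klDiv q (fun m => ∏ h, d h (m h)) := by
    have hle : ∑ m : Fin H → S × A, (q m - ∏ h, d h (m h))
        ≤ klDiv q (fun m => ∏ h, d h (m h)) :=
      Finset.sum_le_sum fun m _ => kl_ptw (q0 m) (rnn m)
        (fun hp => Finset.prod_pos fun h _ => qpos_imp m hp h)
    rw [Finset.sum_sub_distrib, qsum, rsum] at hle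
    linarith
  have hve : ∀ h, entropy (d h) ≤ entropy q := by
    intro h
    unfold entropy
    rw [neg_le_neg_iff, marg h]
    refine Finset.sum_le_sum fun m _ => ?_
    rcases eq_or_lt_of_le (q0 m) with h0 | hpos
    · simp [← h0]
    · exact mul_le_mul_of_nonneg_left (Real.log_le_log hpos (dq h m)) (q0 m)
  refine ⟨by linarith, ?_, by linarith⟩
  calc ∑ h, entropy (d h) ≤ ∑ _h : Fin H, entropy q := Finset.sum_le_sum fun h _ => hve h
    _ = H * entropy q := by simp [Finset.sum_const, Finset.card_univ, nsmul_eq_mul]
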